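/- Let K₀ and K_T be compact subsets of ℝ^d, let μ₀ and μ_T be probability measures on ℝ^d with supports K₀ and K_T respectively, admitting Lebesgue densities f₀ = dμ₀/dλ and f_T = dμ_T/dλ, and let p : K₀ × K_T → ℝ, (y, x) ↦ p(x, y), be continuous and strictly positive on K₀ × K_T. Then for every β ∈ (0, ∞) there exists a pair of non-negative Lebesgue-integrable functions (ρ₀ on K₀, ρ_T on K_T), unique up to λ-almost-everywhere equality, such that f₀(y) = ρ₀(y) ∫_{K_T} p(x, y) ρ_T(x) dx for λ-a.e. y ∈ K₀, and f_T(x) = ρ_T(x)^{(1+β)/β} ∫_{K₀} p(x, y) ρ₀(y) dy for λ-a.e. x ∈ K_T. -/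

import Mathlib

open MeasureTheory

noncomputable section
attribute [local instance] Classical.propDecidable

private lemma rpow_le_one_add {z t : ℝ} (hz : 0 ≤ z) (ht0 : 0 ≤ t) (ht1 : t ≤ 1) :
    z ^ t ≤ 1 + z := by
  rcases le_total z 1 with h | h
  · have := Real.rpow_le_one hz h ht0; linarith
  · have h2 : z ^ t ≤ z ^ (1 : ℝ) := Real.rpow_le_rpow_of_exponent_le h ht1
    rw [Real.rpow_one] at h2; linarith

private lemma log_restrict_cont {E : Type*} [TopologicalSpace E] {g : E → ℝ} {K : Set E}
    (hc : ContinuousOn g K) (hp : ∀ y ∈ K, 0 < g y) :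
    Continuous fun y : ↥K => Real.log (g ↑y) := by
  have h : ContinuousOn (fun y => Real.log (g y)) K := fun y hy =>
    (Real.continuousAt_log (hp y hy).ne').comp_continuousWithinAt (hc y hy)
  exact h.restrict

/-- Bundled setting for the soft-constrained Schrödinger system. -/
structure SSB (d : ℕ) where
  K₀ : Set (Fin d → ℝ)
  KT : Set (Fin d → ℝ)
  hK₀c : IsCompact K₀
  hKTc : IsCompact KT
  f₀ : (Fin d → ℝ) → ℝ
  fT : (Fin d → ℝ) → ℝ
  hf₀m : Measurable f₀
  hfTm : Measurable fT
  hf₀0 : ∀ y, 0 ≤ f₀ y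
  hfT0 : ∀ x, 0 ≤ fT x
  hf₀i : IntegrableOn f₀ K₀ volume
  hfTi : IntegrableOn fT KT volume
  hf₀pos : 0 < ∫ y in K₀, f₀ y
  hfTpos : 0 < ∫ x in KT, fT x
  p : (Fin d → ℝ) → (Fin d → ℝ) → ℝ
  hpc : ContinuousOn (fun q : (Fin d → ℝ) × (Fin d → ℝ) => p q.2 q.1) (K₀ ×ˢ KT)
  m : ℝ
  M : ℝ
  hm : 0 < m
  hmp : ∀ y ∈ K₀, ∀ x ∈ KT, m ≤ p x y
  hpM : ∀ y ∈ K₀, ∀ x ∈ KT, p x y ≤ M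
  t : ℝ
  ht0 : 0 < t
  ht1 : t < 1

namespace SSB

variable {d : ℕ} (S : SSB d)

instance : CompactSpace ↥S.K₀ := isCompact_iff_compactSpace.mp S.hK₀c

lemma K₀meas : MeasurableSet S.K₀ := S.hK₀c.isClosed.measurableSet
lemma KTmeas : MeasurableSet S.KT := S.hKTc.isClosed.measurableSet

lemma K₀ne : S.K₀.Nonempty := by
  by_contra h
  rw [Set.not_nonempty_iff_eq_empty] at h
  have := S.hf₀pos
  rw [h] at this
  simp at this

lemma KTne : S.KT.Nonempty := by
  by_contra h
  rw [Set.not_nonempty_iff_eq_empty] at h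
  have := S.hfTpos
  rw [h] at this
  simp at this

lemma M_pos : 0 < S.M := by
  obtain ⟨y, hy⟩ := S.K₀ne
  obtain ⟨x, hx⟩ := S.KTne
  exact lt_of_lt_of_le (lt_of_lt_of_le S.hm (S.hmp y hy x hx)) (S.hpM y hy x hx)

lemma p_nonneg {x y : Fin d → ℝ} (hy : y ∈ S.K₀) (hx : x ∈ S.KT) : 0 ≤ S.p x y :=
  le_trans S.hm.le (S.hmp y hy x hx)

lemma abs_p_le {x y : Fin d → ℝ} (hy : y ∈ S.K₀) (hx : x ∈ S.KT) : |S.p x y| ≤ S.M :=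
  abs_le.2 ⟨by linarith [S.p_nonneg hy hx, S.M_pos], S.hpM y hy x hx⟩

lemma p_contOn_left {x : Fin d → ℝ} (hx : x ∈ S.KT) :
    ContinuousOn (fun y => S.p x y) S.K₀ := by
  have := S.hpc.comp (f := fun y : Fin d → ℝ => (y, x))
    ((continuous_id.prodMk continuous_const).continuousOn)
    (fun y hy => Set.mk_mem_prod hy hx)
  exact this

lemma p_contOn_right {y : Fin d → ℝ} (hy : y ∈ S.K₀) :
    ContinuousOn (fun x => S.p x y) S.KT := by
  have := S.hpc.comp (f := fun x : Fin d → ℝ => (y, x))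
    ((continuous_const.prodMk continuous_id).continuousOn)
    (fun x hx => Set.mk_mem_prod hy hx)
  exact this

lemma int_left {x : Fin d → ℝ} (hx : x ∈ S.KT) {g h : (Fin d → ℝ) → ℝ}
    (hg : AEStronglyMeasurable g (volume.restrict S.K₀)) (hh : IntegrableOn h S.K₀ volume)
    (hb : ∀ y ∈ S.K₀, |g y| ≤ h y) :
    IntegrableOn (fun y => S.p x y * g y) S.K₀ volume := by
  refine Integrable.mono' (hh.const_mul S.M)
    (((S.p_contOn_left hx).aestronglyMeasurable S.K₀meas).mul hg) ?_
  refine ae_restrict_of_forall_mem S.K₀meas fun y hy => ?_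
  rw [Real.norm_eq_abs, abs_mul]
  exact mul_le_mul (S.abs_p_le hy hx) (hb y hy) (abs_nonneg _) S.M_pos.le

lemma int_right {y : Fin d → ℝ} (hy : y ∈ S.K₀) {g h : (Fin d → ℝ) → ℝ}
    (hg : AEStronglyMeasurable g (volume.restrict S.KT)) (hh : IntegrableOn h S.KT volume)
    (hb : ∀ x ∈ S.KT, |g x| ≤ h x) :
    IntegrableOn (fun x => S.p x y * g x) S.KT volume := by
  refine Integrable.mono' (hh.const_mul S.M)
    (((S.p_contOn_right hy).aestronglyMeasurable S.KTmeas).mul hg) ?_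
  refine ae_restrict_of_forall_mem S.KTmeas fun x hx => ?_
  rw [Real.norm_eq_abs, abs_mul]
  exact mul_le_mul (S.abs_p_le hy hx) (hb x hx) (abs_nonneg _) S.M_pos.le

/-! ### The operator -/

def ext (u : C(↥S.K₀, ℝ)) : (Fin d → ℝ) → ℝ := fun y => if h : y ∈ S.K₀ then u ⟨y, h⟩ else 0

lemma ext_apply (u : C(↥S.K₀, ℝ)) {y : Fin d → ℝ} (h : y ∈ S.K₀) :
    S.ext u y = u ⟨y, h⟩ := dif_pos h

lemma ext_meas (u : C(↥S.K₀, ℝ)) : Measurable (S.ext u) :=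
  Measurable.dite (f := fun y : ↥S.K₀ => u y) u.continuous.measurable
    (measurable_const (a := (0 : ℝ))) S.K₀meas

lemma abs_ext_le (u : C(↥S.K₀, ℝ)) (y : Fin d → ℝ) : |S.ext u y| ≤ ‖u‖ := by
  unfold ext
  split
  · rw [← Real.norm_eq_abs]; exact u.norm_coe_le_norm _
  · simpa using norm_nonneg u

def r0 (u : C(↥S.K₀, ℝ)) : (Fin d → ℝ) → ℝ := fun y => S.f₀ y * Real.exp (-(S.ext u y))

lemma r0_nonneg (u : C(↥S.K₀, ℝ)) (y : Fin d → ℝ) : 0 ≤ S.r0 u y :=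
  mul_nonneg (S.hf₀0 y) (Real.exp_pos _).le

lemma r0_le (u : C(↥S.K₀, ℝ)) (y : Fin d → ℝ) : S.r0 u y ≤ Real.exp ‖u‖ * S.f₀ y := by
  have h := abs_le.mp (S.abs_ext_le u y)
  have : Real.exp (-(S.ext u y)) ≤ Real.exp ‖u‖ := Real.exp_le_exp.2 (by linarith [h.1])
  calc S.r0 u y = S.f₀ y * Real.exp (-(S.ext u y)) := rfl
    _ ≤ S.f₀ y * Real.exp ‖u‖ := mul_le_mul_of_nonneg_left this (S.hf₀0 y)
    _ = Real.exp ‖u‖ * S.f₀ y := mul_comm _ _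

lemma r0_ge (u : C(↥S.K₀, ℝ)) (y : Fin d → ℝ) :
    Real.exp (-‖u‖) * S.f₀ y ≤ S.r0 u y := by
  have h := abs_le.mp (S.abs_ext_le u y)
  have : Real.exp (-‖u‖) ≤ Real.exp (-(S.ext u y)) := Real.exp_le_exp.2 (by linarith [h.2])
  calc Real.exp (-‖u‖) * S.f₀ y = S.f₀ y * Real.exp (-‖u‖) := mul_comm _ _
    _ ≤ S.f₀ y * Real.exp (-(S.ext u y)) := mul_le_mul_of_nonneg_left this (S.hf₀0 y)
    _ = S.r0 u y := rfl

lemma r0_meas (u : C(↥S.K₀, ℝ)) : Measurable (S.r0 u) :=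
  S.hf₀m.mul (Real.measurable_exp.comp (S.ext_meas u).neg)

lemma r0_int (u : C(↥S.K₀, ℝ)) : IntegrableOn (S.r0 u) S.K₀ volume := by
  refine Integrable.mono' (S.hf₀i.const_mul (Real.exp ‖u‖))
    (S.r0_meas u).aestronglyMeasurable ?_
  refine ae_restrict_of_forall_mem S.K₀meas fun y _ => ?_
  rw [Real.norm_eq_abs, abs_of_nonneg (S.r0_nonneg u y)]
  exact S.r0_le u y

def I0 : ℝ := ∫ y in S.K₀, S.f₀ y

def aC (u : C(↥S.K₀, ℝ)) : ℝ := S.m * Real.exp (-‖u‖) * S.I0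

lemma aC_pos (u : C(↥S.K₀, ℝ)) : 0 < S.aC u :=
  mul_pos (mul_pos S.hm (Real.exp_pos _)) S.hf₀pos

def A (u : C(↥S.K₀, ℝ)) : (Fin d → ℝ) → ℝ :=
  fun x => ∫ y in S.K₀, S.p x y * S.r0 u y

lemma A_int (u : C(↥S.K₀, ℝ)) {x : Fin d → ℝ} (hx : x ∈ S.KT) :
    IntegrableOn (fun y => S.p x y * S.r0 u y) S.K₀ volume :=
  S.int_left hx (S.r0_meas u).aestronglyMeasurable (S.hf₀i.const_mul (Real.exp ‖u‖))
    (fun y _ => by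
      rw [abs_of_nonneg (S.r0_nonneg u y)]; exact S.r0_le u y)

lemma A_ge (u : C(↥S.K₀, ℝ)) {x : Fin d → ℝ} (hx : x ∈ S.KT) : S.aC u ≤ S.A u x := by
  have h1 : ∫ y in S.K₀, (S.m * Real.exp (-‖u‖)) * S.f₀ y ≤ ∫ y in S.K₀, S.p x y * S.r0 u y := by
    refine setIntegral_mono_on (S.hf₀i.const_mul _) (S.A_int u hx) S.K₀meas fun y hy => ?_
    calc S.m * Real.exp (-‖u‖) * S.f₀ y = S.m * (Real.exp (-‖u‖) * S.f₀ y) := by ring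
      _ ≤ S.p x y * S.r0 u y :=
        mul_le_mul (S.hmp y hy x hx) (S.r0_ge u y)
          (mul_nonneg (Real.exp_pos _).le (S.hf₀0 y)) (S.p_nonneg hy hx)
  rw [integral_const_mul] at h1
  exact le_trans (le_of_eq (by rw [aC, I0])) h1

lemma A_le (u : C(↥S.K₀, ℝ)) {x : Fin d → ℝ} (hx : x ∈ S.KT) :
    S.A u x ≤ S.M * Real.exp ‖u‖ * S.I0 := by
  have h1 : ∫ y in S.K₀, S.p x y * S.r0 u y ≤ ∫ y in S.K₀, (S.M * Real.exp ‖u‖) * S.f₀ y := by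
    refine setIntegral_mono_on (S.A_int u hx) (S.hf₀i.const_mul _) S.K₀meas fun y hy => ?_
    calc S.p x y * S.r0 u y ≤ S.M * (Real.exp ‖u‖ * S.f₀ y) :=
          mul_le_mul (S.hpM y hy x hx) (S.r0_le u y) (S.r0_nonneg u y) S.M_pos.le
      _ = S.M * Real.exp ‖u‖ * S.f₀ y := by ring
  rw [integral_const_mul] at h1
  exact le_trans h1 (le_of_eq (by rw [I0]))

lemma A_pos (u : C(↥S.K₀, ℝ)) {x : Fin d → ℝ} (hx : x ∈ S.KT) : 0 < S.A u x :=
  lt_of_lt_of_le (S.aC_pos u) (S.A_ge u hx)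

lemma A_contOn (u : C(↥S.K₀, ℝ)) : ContinuousOn (S.A u) S.KT := by
  intro x₀ hx₀
  refine continuousWithinAt_of_dominated
    (bound := fun y => S.M * (Real.exp ‖u‖ * S.f₀ y)) ?_ ?_ ?_ ?_
  · filter_upwards [self_mem_nhdsWithin] with x hx
    exact (S.A_int u hx).aestronglyMeasurable
  · filter_upwards [self_mem_nhdsWithin] with x hx
    refine ae_restrict_of_forall_mem S.K₀meas fun y hy => ?_
    rw [Real.norm_eq_abs, abs_mul]
    refine mul_le_mul (S.abs_p_le hy hx) ?_ (abs_nonneg _) S.M_pos.le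
    rw [abs_of_nonneg (S.r0_nonneg u y)]; exact S.r0_le u y
  · exact (S.hf₀i.const_mul (Real.exp ‖u‖)).const_mul S.M
  · refine ae_restrict_of_forall_mem S.K₀meas fun y hy => ?_
    exact ((S.p_contOn_right hy) x₀ hx₀).mul continuousWithinAt_const

def B (u : C(↥S.K₀, ℝ)) : (Fin d → ℝ) → ℝ :=
  fun x => (S.fT x / S.A u x) ^ S.t

lemma B_nonneg (u : C(↥S.K₀, ℝ)) {x : Fin d → ℝ} (hx : x ∈ S.KT) : 0 ≤ S.B u x :=
  Real.rpow_nonneg (div_nonneg (S.hfT0 x) (S.A_pos u hx).le) _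

lemma B_le (u : C(↥S.K₀, ℝ)) {x : Fin d → ℝ} (hx : x ∈ S.KT) :
    S.B u x ≤ 1 + S.fT x / S.aC u := by
  have h1 : S.fT x / S.A u x ≤ S.fT x / S.aC u := by
    gcongr
    exacts [S.hfT0 x, S.aC_pos u, S.A_ge u hx]
  calc S.B u x ≤ (S.fT x / S.aC u) ^ S.t :=
        Real.rpow_le_rpow (div_nonneg (S.hfT0 x) (S.A_pos u hx).le) h1 S.ht0.le
    _ ≤ 1 + S.fT x / S.aC u :=
        rpow_le_one_add (div_nonneg (S.hfT0 x) (S.aC_pos u).le) S.ht0.le S.ht1.le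

lemma continuous_rpow_t : Continuous fun z : ℝ => z ^ S.t :=
  continuous_iff_continuousAt.2 fun z => Real.continuousAt_rpow_const z S.t (Or.inr S.ht0.le)

lemma B_aesm (u : C(↥S.K₀, ℝ)) : AEStronglyMeasurable (S.B u) (volume.restrict S.KT) := by
  have h0 : AEMeasurable (S.A u) (volume.restrict S.KT) :=
    (S.A_contOn u).aemeasurable S.KTmeas
  have h1 : AEMeasurable (fun x => S.fT x / S.A u x) (volume.restrict S.KT) :=
    S.hfTm.aemeasurable.div h0
  exact S.continuous_rpow_t.comp_aestronglyMeasurable h1.aestronglyMeasurable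

lemma bB_int (u : C(↥S.K₀, ℝ)) :
    IntegrableOn (fun x => 1 + S.fT x / S.aC u) S.KT volume :=
  (integrableOn_const S.hKTc.measure_lt_top.ne).add (S.hfTi.div_const _)

lemma B_int (u : C(↥S.K₀, ℝ)) : IntegrableOn (S.B u) S.KT volume := by
  refine Integrable.mono' (S.bB_int u) (S.B_aesm u) ?_
  refine ae_restrict_of_forall_mem S.KTmeas fun x hx => ?_
  rw [Real.norm_eq_abs, abs_of_nonneg (S.B_nonneg u hx)]
  exact S.B_le u hx

def JB (u : C(↥S.K₀, ℝ)) : ℝ := ∫ x in S.KT, S.B u x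

lemma JB_pos (u : C(↥S.K₀, ℝ)) : 0 < S.JB u := by
  have hnn : 0 ≤ S.JB u := setIntegral_nonneg S.KTmeas fun x hx => S.B_nonneg u hx
  rcases hnn.lt_or_eq with h | h
  · exact h
  exfalso
  have h0 : S.B u =ᵐ[volume.restrict S.KT] 0 := by
    refine (integral_eq_zero_iff_of_nonneg_ae ?_ (S.B_int u)).1 h.symm
    exact ae_restrict_of_forall_mem S.KTmeas fun x hx => S.B_nonneg u hx
  have hfT0' : S.fT =ᵐ[volume.restrict S.KT] 0 := by
    filter_upwards [h0, self_mem_ae_restrict S.KTmeas] with x hBx hxKT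
    by_contra hne
    have hpos : 0 < S.fT x := lt_of_le_of_ne (S.hfT0 x) (Ne.symm hne)
    have : 0 < S.B u x :=
      Real.rpow_pos_of_pos (div_pos hpos (S.A_pos u hxKT)) _
    rw [hBx] at this
    exact lt_irrefl _ this
  have : ∫ x in S.KT, S.fT x = 0 := by
    rw [integral_congr_ae hfT0']; simp
  exact S.hfTpos.ne' this

def c (u : C(↥S.K₀, ℝ)) : (Fin d → ℝ) → ℝ :=
  fun y => ∫ x in S.KT, S.p x y * S.B u x

lemma c_int (u : C(↥S.K₀, ℝ)) {y : Fin d → ℝ} (hy : y ∈ S.K₀) :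
    IntegrableOn (fun x => S.p x y * S.B u x) S.KT volume :=
  S.int_right hy (S.B_aesm u) (S.bB_int u)
    (fun x hx => by rw [abs_of_nonneg (S.B_nonneg u hx)]; exact S.B_le u hx)

lemma c_ge (u : C(↥S.K₀, ℝ)) {y : Fin d → ℝ} (hy : y ∈ S.K₀) :
    S.m * S.JB u ≤ S.c u y := by
  have h1 : ∫ x in S.KT, S.m * S.B u x ≤ ∫ x in S.KT, S.p x y * S.B u x := by
    refine setIntegral_mono_on ((S.B_int u).const_mul S.m) (S.c_int u hy) S.KTmeas fun x hx => ?_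
    exact mul_le_mul_of_nonneg_right (S.hmp y hy x hx) (S.B_nonneg u hx)
  rw [integral_const_mul] at h1
  exact h1

lemma c_pos (u : C(↥S.K₀, ℝ)) {y : Fin d → ℝ} (hy : y ∈ S.K₀) : 0 < S.c u y :=
  lt_of_lt_of_le (mul_pos S.hm (S.JB_pos u)) (S.c_ge u hy)

lemma c_contOn (u : C(↥S.K₀, ℝ)) : ContinuousOn (S.c u) S.K₀ := by
  intro y₀ hy₀
  refine continuousWithinAt_of_dominated
    (bound := fun x => S.M * (1 + S.fT x / S.aC u)) ?_ ?_ ?_ ?_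
  · filter_upwards [self_mem_nhdsWithin] with y hy
    exact (S.c_int u hy).aestronglyMeasurable
  · filter_upwards [self_mem_nhdsWithin] with y hy
    refine ae_restrict_of_forall_mem S.KTmeas fun x hx => ?_
    rw [Real.norm_eq_abs, abs_mul]
    refine mul_le_mul (S.abs_p_le hy hx) ?_ (abs_nonneg _) S.M_pos.le
    rw [abs_of_nonneg (S.B_nonneg u hx)]; exact S.B_le u hx
  · exact (S.bB_int u).const_mul S.M
  · refine ae_restrict_of_forall_mem S.KTmeas fun x hx => ?_
    exact ((S.p_contOn_left hx) y₀ hy₀).mul continuousWithinAt_const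

def F : C(↥S.K₀, ℝ) → C(↥S.K₀, ℝ) := fun u =>
  ⟨fun y => Real.log (S.c u ↑y),
    log_restrict_cont (S.c_contOn u) (fun y hy => S.c_pos u hy)⟩

lemma F_apply (u : C(↥S.K₀, ℝ)) (y : ↥S.K₀) : S.F u y = Real.log (S.c u ↑y) := rfl

/-! ### Contraction estimates -/

lemma A_le_exp (u v : C(↥S.K₀, ℝ)) {x : Fin d → ℝ} (hx : x ∈ S.KT) :
    S.A u x ≤ Real.exp (dist u v) * S.A v x := by
  have h1 : ∫ y in S.K₀, S.p x y * S.r0 u y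
      ≤ ∫ y in S.K₀, Real.exp (dist u v) * (S.p x y * S.r0 v y) := by
    refine setIntegral_mono_on (S.A_int u hx) ((S.A_int v hx).const_mul _) S.K₀meas fun y hy => ?_
    have hd : |u ⟨y, hy⟩ - v ⟨y, hy⟩| ≤ dist u v := by
      have := ContinuousMap.dist_apply_le_dist (f := u) (g := v) ⟨y, hy⟩
      rwa [Real.dist_eq] at this
    have hd' := abs_le.mp hd
    have he : Real.exp (-(S.ext u y)) ≤ Real.exp (dist u v) * Real.exp (-(S.ext v y)) := by
      rw [← Real.exp_add, Real.exp_le_exp, S.ext_apply u hy, S.ext_apply v hy]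
      linarith [hd'.2]
    calc S.p x y * S.r0 u y = (S.p x y * S.f₀ y) * Real.exp (-(S.ext u y)) := by
          rw [r0]; ring
      _ ≤ (S.p x y * S.f₀ y) * (Real.exp (dist u v) * Real.exp (-(S.ext v y))) :=
          mul_le_mul_of_nonneg_left he (mul_nonneg (S.p_nonneg hy hx) (S.hf₀0 y))
      _ = Real.exp (dist u v) * (S.p x y * S.r0 v y) := by rw [r0]; ring
  rw [integral_const_mul] at h1
  exact h1

lemma B_le_exp (u v : C(↥S.K₀, ℝ)) {x : Fin d → ℝ} (hx : x ∈ S.KT) :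
    S.B u x ≤ Real.exp (S.t * dist u v) * S.B v x := by
  set δ := dist u v with hδ
  have hAu : 0 < S.A u x := S.A_pos u hx
  have hAv : 0 < S.A v x := S.A_pos v hx
  have h1 : S.A v x ≤ Real.exp δ * S.A u x := by
    have := S.A_le_exp v u hx
    rwa [dist_comm] at this
  have h2 : S.fT x / S.A u x ≤ Real.exp δ * S.fT x / S.A v x := by
    rw [div_le_div_iff₀ hAu hAv]
    calc S.fT x * S.A v x ≤ S.fT x * (Real.exp δ * S.A u x) :=
          mul_le_mul_of_nonneg_left h1 (S.hfT0 x)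
      _ = Real.exp δ * S.fT x * S.A u x := by ring
  calc S.B u x ≤ (Real.exp δ * S.fT x / S.A v x) ^ S.t :=
        Real.rpow_le_rpow (div_nonneg (S.hfT0 x) hAu.le) h2 S.ht0.le
    _ = (Real.exp δ * (S.fT x / S.A v x)) ^ S.t := by rw [mul_div_assoc]
    _ = (Real.exp δ) ^ S.t * S.B v x :=
        Real.mul_rpow (Real.exp_pos _).le (div_nonneg (S.hfT0 x) hAv.le)
    _ = Real.exp (S.t * δ) * S.B v x := by rw [mul_comm S.t δ, Real.exp_mul]

lemma c_le_exp (u v : C(↥S.K₀, ℝ)) {y : Fin d → ℝ} (hy : y ∈ S.K₀) :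
    S.c u y ≤ Real.exp (S.t * dist u v) * S.c v y := by
  have h1 : ∫ x in S.KT, S.p x y * S.B u x
      ≤ ∫ x in S.KT, Real.exp (S.t * dist u v) * (S.p x y * S.B v x) := by
    refine setIntegral_mono_on (S.c_int u hy) ((S.c_int v hy).const_mul _) S.KTmeas fun x hx => ?_
    calc S.p x y * S.B u x ≤ S.p x y * (Real.exp (S.t * dist u v) * S.B v x) :=
          mul_le_mul_of_nonneg_left (S.B_le_exp u v hx) (S.p_nonneg hy hx)
      _ = Real.exp (S.t * dist u v) * (S.p x y * S.B v x) := by ring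
  rw [integral_const_mul] at h1
  exact h1

lemma F_contract (u v : C(↥S.K₀, ℝ)) : dist (S.F u) (S.F v) ≤ S.t * dist u v := by
  refine (ContinuousMap.dist_le (mul_nonneg S.ht0.le dist_nonneg)).2 fun y => ?_
  rw [Real.dist_eq, F_apply, F_apply]
  have key : ∀ u' v' : C(↥S.K₀, ℝ),
      Real.log (S.c u' ↑y) - Real.log (S.c v' ↑y) ≤ S.t * dist u' v' := by
    intro u' v'
    have h1 : Real.log (S.c u' ↑y) ≤ Real.log (Real.exp (S.t * dist u' v') * S.c v' ↑y) :=
      Real.log_le_log (S.c_pos u' y.2) (S.c_le_exp u' v' y.2)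
    rw [Real.log_mul (Real.exp_ne_zero _) (S.c_pos v' y.2).ne', Real.log_exp] at h1
    linarith
  refine abs_sub_le_iff.2 ⟨key u v, ?_⟩
  have := key v u
  rwa [dist_comm] at this

lemma contractingF : ContractingWith ⟨S.t, S.ht0.le⟩ S.F := by
  constructor
  · exact NNReal.coe_lt_coe.1 S.ht1
  · exact LipschitzWith.of_dist_le_mul fun u v => S.F_contract u v

end SSB

/-- `(ρ₀, ρ_T)` is a pair of non-negative Lebesgue-integrable functions (on `K₀`, `K_T`
respectively) solving the soft-constrained Schrödinger system with kernel `p` and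
parameter `β`:
`f₀(y) = ρ₀(y) ∫_{K_T} p(x, y) ρ_T(x) dx` for a.e. `y ∈ K₀` and
`f_T(x) = ρ_T(x)^{(1+β)/β} ∫_{K₀} p(x, y) ρ₀(y) dy` for a.e. `x ∈ K_T`. -/
def IsSSBSolution {d : ℕ} (K₀ KT : Set (Fin d → ℝ)) (f₀ fT : (Fin d → ℝ) → ℝ)
    (p : (Fin d → ℝ) → (Fin d → ℝ) → ℝ) (β : ℝ) (ρ₀ ρT : (Fin d → ℝ) → ℝ) : Prop :=
  Measurable ρ₀ ∧ Measurable ρT ∧ (∀ y, 0 ≤ ρ₀ y) ∧ (∀ x, 0 ≤ ρT x) ∧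
  IntegrableOn ρ₀ K₀ volume ∧ IntegrableOn ρT KT volume ∧
  (∀ᵐ y ∂(volume.restrict K₀),
    f₀ y = ρ₀ y * ∫ x in KT, p x y * ρT x ∂volume) ∧
  (∀ᵐ x ∂(volume.restrict KT),
    fT x = ρT x ^ ((1 + β) / β) * ∫ y in K₀, p x y * ρ₀ y ∂volume)

/-- Existence and uniqueness (up to λ-a.e. equality) of the solution of the soft-constrained
Schrödinger system on compact supports, for every `β ∈ (0, ∞)`. -/
theorem stmt0 {d : ℕ} (K₀ KT : Set (Fin d → ℝ)) (hK₀c : IsCompact K₀) (hKTc : IsCompact KT)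
    (μ₀ μT : Measure (Fin d → ℝ)) [IsProbabilityMeasure μ₀] [IsProbabilityMeasure μT]
    (f₀ fT : (Fin d → ℝ) → ℝ) (hf₀m : Measurable f₀) (hfTm : Measurable fT)
    (hf₀0 : ∀ y, 0 ≤ f₀ y) (hfT0 : ∀ x, 0 ≤ fT x)
    (hμ₀ : μ₀ = volume.withDensity fun y => ENNReal.ofReal (f₀ y))
    (hμT : μT = volume.withDensity fun x => ENNReal.ofReal (fT x))
    (hsupp₀ : μ₀ K₀ᶜ = 0)
    (hsupp₀' : ∀ U : Set (Fin d → ℝ), IsOpen U → (U ∩ K₀).Nonempty → 0 < μ₀ U)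
    (hsuppT : μT KTᶜ = 0)
    (hsuppT' : ∀ U : Set (Fin d → ℝ), IsOpen U → (U ∩ KT).Nonempty → 0 < μT U)
    (p : (Fin d → ℝ) → (Fin d → ℝ) → ℝ)
    (hpc : ContinuousOn (fun q : (Fin d → ℝ) × (Fin d → ℝ) => p q.2 q.1) (K₀ ×ˢ KT))
    (hpp : ∀ y ∈ K₀, ∀ x ∈ KT, 0 < p x y)
    (β : ℝ) (hβ : 0 < β) :
    ∃ ρ₀ ρT : (Fin d → ℝ) → ℝ, IsSSBSolution K₀ KT f₀ fT p β ρ₀ ρT ∧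
      ∀ ρ₀' ρT' : (Fin d → ℝ) → ℝ, IsSSBSolution K₀ KT f₀ fT p β ρ₀' ρT' →
        ρ₀' =ᵐ[volume.restrict K₀] ρ₀ ∧ ρT' =ᵐ[volume.restrict KT] ρT := by

  have hK₀meas : MeasurableSet K₀ := hK₀c.isClosed.measurableSet
  have hKTmeas : MeasurableSet KT := hKTc.isClosed.measurableSet
  -- total masses
  have hμ₀K : μ₀ K₀ = 1 := by
    have h := measure_add_measure_compl (μ := μ₀) hK₀meas
    rw [hsupp₀, add_zero] at h
    rw [h]; exact measure_univ
  have hμTK : μT KT = 1 := by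
    have h := measure_add_measure_compl (μ := μT) hKTmeas
    rw [hsuppT, add_zero] at h
    rw [h]; exact measure_univ
  have hl₀ : ∫⁻ y in K₀, ENNReal.ofReal (f₀ y) ∂volume = 1 := by
    rw [← withDensity_apply _ hK₀meas, ← hμ₀, hμ₀K]
  have hlT : ∫⁻ x in KT, ENNReal.ofReal (fT x) ∂volume = 1 := by
    rw [← withDensity_apply _ hKTmeas, ← hμT, hμTK]
  have hf₀i : IntegrableOn f₀ K₀ volume := by
    refine ⟨hf₀m.aestronglyMeasurable, ?_⟩
    rw [HasFiniteIntegral]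
    have : ∀ y, (‖f₀ y‖ₑ : ENNReal) = ENNReal.ofReal (f₀ y) :=
      fun y => Real.enorm_eq_ofReal (hf₀0 y)
    simp_rw [this, hl₀]
    norm_num
  have hfTi : IntegrableOn fT KT volume := by
    refine ⟨hfTm.aestronglyMeasurable, ?_⟩
    rw [HasFiniteIntegral]
    have : ∀ x, (‖fT x‖ₑ : ENNReal) = ENNReal.ofReal (fT x) :=
      fun x => Real.enorm_eq_ofReal (hfT0 x)
    simp_rw [this, hlT]
    norm_num
  have hf₀I : ∫ y in K₀, f₀ y = 1 := by
    rw [integral_eq_lintegral_of_nonneg_ae (ae_of_all _ hf₀0) hf₀m.aestronglyMeasurable, hl₀]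
    simp
  have hfTI : ∫ x in KT, fT x = 1 := by
    rw [integral_eq_lintegral_of_nonneg_ae (ae_of_all _ hfT0) hfTm.aestronglyMeasurable, hlT]
    simp
  -- nonempty supports and bounds on p
  have hK₀ne : K₀.Nonempty := by
    by_contra h
    rw [Set.not_nonempty_iff_eq_empty] at h
    rw [h] at hμ₀K; simp at hμ₀K
  have hKTne : KT.Nonempty := by
    by_contra h
    rw [Set.not_nonempty_iff_eq_empty] at h
    rw [h] at hμTK; simp at hμTK
  obtain ⟨y₀, hy₀⟩ := hK₀ne
  obtain ⟨x₀, hx₀⟩ := hKTne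
  have hprodne : (K₀ ×ˢ KT).Nonempty := ⟨(y₀, x₀), Set.mk_mem_prod hy₀ hx₀⟩
  obtain ⟨qm, hqm, hqmin⟩ := (hK₀c.prod hKTc).exists_isMinOn hprodne hpc
  obtain ⟨qM, hqM, hqmax⟩ := (hK₀c.prod hKTc).exists_isMaxOn hprodne hpc
  have hm : 0 < p qm.2 qm.1 := hpp _ hqm.1 _ hqm.2
  have hmp : ∀ y ∈ K₀, ∀ x ∈ KT, p qm.2 qm.1 ≤ p x y :=
    fun y hy x hx => hqmin (Set.mk_mem_prod hy hx)
  have hpM : ∀ y ∈ K₀, ∀ x ∈ KT, p x y ≤ p qM.2 qM.1 :=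
    fun y hy x hx => hqmax (Set.mk_mem_prod hy hx)
  have h1β : (0:ℝ) < 1 + β := by linarith
  -- bundle
  set S : SSB d :=
    { K₀ := K₀, KT := KT, hK₀c := hK₀c, hKTc := hKTc,
      f₀ := f₀, fT := fT, hf₀m := hf₀m, hfTm := hfTm, hf₀0 := hf₀0, hfT0 := hfT0,
      hf₀i := hf₀i, hfTi := hfTi,
      hf₀pos := by rw [hf₀I]; norm_num,
      hfTpos := by rw [hfTI]; norm_num,
      p := p, hpc := hpc,
      m := p qm.2 qm.1, M := p qM.2 qM.1,
      hm := hm, hmp := hmp, hpM := hpM,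
      t := β / (1 + β),
      ht0 := div_pos hβ h1β,
      ht1 := by rw [div_lt_one h1β]; linarith } with hS
  have htval : S.t * ((1 + β) / β) = 1 := by
    show β / (1 + β) * ((1 + β) / β) = 1
    field_simp
  haveI : CompactSpace ↥S.K₀ := isCompact_iff_compactSpace.mp S.hK₀c
  haveI : Nonempty C(↥S.K₀, ℝ) := ⟨0⟩
  have hC := S.contractingF
  set ustar := ContractingWith.fixedPoint S.F hC with hustar
  have hfix : S.F ustar = ustar := hC.fixedPoint_isFixedPt
  -- the solution
  set ρ₀ : (Fin d → ℝ) → ℝ := K₀.indicator (S.r0 ustar) with hρ₀def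
  set ρT : (Fin d → ℝ) → ℝ := fun x => if h : x ∈ KT then S.B ustar x else 0 with hρTdef
  have hρ₀meas : Measurable ρ₀ := (S.r0_meas ustar).indicator hK₀meas
  have hρTmeas : Measurable ρT := by
    have h1 : Continuous fun x : ↥KT => S.A ustar ↑x := (S.A_contOn ustar).restrict
    have h2 : Measurable fun x : ↥KT => S.B ustar ↑x :=
      S.continuous_rpow_t.measurable.comp
        ((hfTm.comp measurable_subtype_coe).div h1.measurable)
    exact Measurable.dite (f := fun x : ↥KT => S.B ustar ↑x) h2 measurable_const hKTmeas
  have hρ₀0 : ∀ y, 0 ≤ ρ₀ y :=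
    fun y => Set.indicator_nonneg (fun z _ => S.r0_nonneg ustar z) y
  have hρT0 : ∀ x, 0 ≤ ρT x := by
    intro x
    by_cases h : x ∈ KT
    · rw [hρTdef]; simp only [dif_pos h]; exact S.B_nonneg ustar h
    · rw [hρTdef]; simp only [dif_neg h]; exact le_refl 0
  have hρ₀i : IntegrableOn ρ₀ K₀ volume := (S.r0_int ustar).indicator hK₀meas
  have hρTi : IntegrableOn ρT KT volume :=
    (S.B_int ustar).congr (ae_restrict_of_forall_mem hKTmeas fun x hx => by
      simp only [hρTdef]; rw [dif_pos hx])
  have heq1 : ∀ᵐ y ∂(volume.restrict K₀), f₀ y = ρ₀ y * ∫ x in KT, p x y * ρT x ∂volume := by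
    refine ae_restrict_of_forall_mem hK₀meas fun y hy => ?_
    have hint : (∫ x in KT, p x y * ρT x ∂volume) = S.c ustar y :=
      setIntegral_congr_ae hKTmeas (ae_of_all _ fun x hx => by rw [hρTdef]; simp only [dif_pos hx]; rfl)
    have hfixy : Real.log (S.c ustar y) = ustar ⟨y, hy⟩ := ContinuousMap.congr_fun hfix ⟨y, hy⟩
    have hcpos := S.c_pos ustar hy
    have hc : S.c ustar y = Real.exp (ustar ⟨y, hy⟩) := by
      rw [← hfixy, Real.exp_log hcpos]
    rw [hint, hc, hρ₀def, Set.indicator_of_mem hy]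
    show f₀ y = (S.f₀ y * Real.exp (-(S.ext ustar y))) * Real.exp (ustar ⟨y, hy⟩)
    rw [S.ext_apply ustar hy]
    rw [mul_assoc, ← Real.exp_add]
    simp; rfl
  have heq2 : ∀ᵐ x ∂(volume.restrict KT),
      fT x = ρT x ^ ((1 + β) / β) * ∫ y in K₀, p x y * ρ₀ y ∂volume := by
    refine ae_restrict_of_forall_mem hKTmeas fun x hx => ?_
    have hintA : (∫ y in K₀, p x y * ρ₀ y ∂volume) = S.A ustar x :=
      setIntegral_congr_ae hK₀meas
        (ae_of_all _ fun y hy => by rw [hρ₀def, Set.indicator_of_mem hy])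
    have hA := S.A_pos ustar hx
    have hbase : 0 ≤ fT x / S.A ustar x := div_nonneg (hfT0 x) hA.le
    rw [hintA, hρTdef]
    simp only [dif_pos hx]
    have hBpow : (S.B ustar x) ^ ((1 + β) / β) = fT x / S.A ustar x := by
      show ((fT x / S.A ustar x) ^ S.t) ^ ((1 + β) / β) = fT x / S.A ustar x
      rw [← Real.rpow_mul hbase, htval, Real.rpow_one]
    rw [hBpow, div_mul_cancel₀ _ hA.ne']
  refine ⟨ρ₀, ρT, ⟨hρ₀meas, hρTmeas, hρ₀0, hρT0, hρ₀i, hρTi, heq1, heq2⟩, ?_⟩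
  -- uniqueness
  rintro ρ₀' ρT' ⟨h1m, h2m, h10, h20, h1i, h2i, he1, he2⟩
  set c' : (Fin d → ℝ) → ℝ := fun y => ∫ x in KT, p x y * ρT' x ∂volume with hc'def
  set cT' : (Fin d → ℝ) → ℝ := fun x => ∫ y in K₀, p x y * ρ₀' y ∂volume with hcT'def
  have hρT'ne : ¬ (ρT' =ᵐ[volume.restrict KT] 0) := by
    intro h
    have hzero : ∀ y, (∫ x in KT, p x y * ρT' x ∂volume) = 0 := fun y =>
      integral_eq_zero_of_ae (h.mono fun x hx => by
        simp only [Pi.zero_apply] at hx ⊢; rw [hx, mul_zero])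
    have hz : f₀ =ᵐ[volume.restrict K₀] 0 := he1.mono fun y hy => by
      simp only [Pi.zero_apply]; rw [hy, hzero y, mul_zero]
    have h0 : ∫ y in K₀, f₀ y = 0 := by rw [integral_congr_ae hz]; simp
    rw [hf₀I] at h0; norm_num at h0
  have hJT' : 0 < ∫ x in KT, ρT' x := by
    rcases (setIntegral_nonneg hKTmeas fun x _ => h20 x).lt_or_eq with h | h
    · exact h
    · exact absurd ((integral_eq_zero_iff_of_nonneg h20 h2i).1 h.symm) hρT'ne
  have hint' : ∀ y ∈ K₀, IntegrableOn (fun x => p x y * ρT' x) KT volume :=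
    fun y hy => S.int_right hy h2m.aestronglyMeasurable h2i
      (fun x _ => by rw [abs_of_nonneg (h20 x)])
  have hc'pos : ∀ y ∈ K₀, 0 < c' y := by
    intro y hy
    have h1 : ∫ x in KT, p qm.2 qm.1 * ρT' x ≤ c' y := by
      refine setIntegral_mono_on (h2i.const_mul _) (hint' y hy) hKTmeas fun x hx => ?_
      exact mul_le_mul_of_nonneg_right (hmp y hy x hx) (h20 x)
    rw [integral_const_mul] at h1
    exact lt_of_lt_of_le (mul_pos hm hJT') h1
  have hc'cont : ContinuousOn c' K₀ := by
    intro y₁ hy₁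
    refine continuousWithinAt_of_dominated (bound := fun x => p qM.2 qM.1 * ρT' x) ?_ ?_ ?_ ?_
    · filter_upwards [self_mem_nhdsWithin] with y hy
      exact (hint' y hy).aestronglyMeasurable
    · filter_upwards [self_mem_nhdsWithin] with y hy
      refine ae_restrict_of_forall_mem hKTmeas fun x hx => ?_
      rw [Real.norm_eq_abs, abs_mul, abs_of_nonneg (h20 x)]
      exact mul_le_mul_of_nonneg_right (S.abs_p_le hy hx) (h20 x)
    · exact h2i.const_mul _
    · refine ae_restrict_of_forall_mem hKTmeas fun x hx => ?_
      exact ((S.p_contOn_left hx) y₁ hy₁).mul continuousWithinAt_const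
  -- same facts on the K₀ side
  have hρ₀'ne : ¬ (ρ₀' =ᵐ[volume.restrict K₀] 0) := by
    intro h
    have hzero : ∀ x, (∫ y in K₀, p x y * ρ₀' y ∂volume) = 0 := fun x =>
      integral_eq_zero_of_ae (h.mono fun y hy => by
        simp only [Pi.zero_apply] at hy ⊢; rw [hy, mul_zero])
    have hz : fT =ᵐ[volume.restrict KT] 0 := he2.mono fun x hx => by
      simp only [Pi.zero_apply]; rw [hx, hzero x, mul_zero]
    have h0 : ∫ x in KT, fT x = 0 := by rw [integral_congr_ae hz]; simp
    rw [hfTI] at h0; norm_num at h0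
  have hJ0' : 0 < ∫ y in K₀, ρ₀' y := by
    rcases (setIntegral_nonneg hK₀meas fun y _ => h10 y).lt_or_eq with h | h
    · exact h
    · exact absurd ((integral_eq_zero_iff_of_nonneg h10 h1i).1 h.symm) hρ₀'ne
  have hint0' : ∀ x ∈ KT, IntegrableOn (fun y => p x y * ρ₀' y) K₀ volume :=
    fun x hx => S.int_left hx h1m.aestronglyMeasurable h1i
      (fun y _ => by rw [abs_of_nonneg (h10 y)])
  have hcT'pos : ∀ x ∈ KT, 0 < cT' x := by
    intro x hx
    have h1 : ∫ y in K₀, p qm.2 qm.1 * ρ₀' y ≤ cT' x := by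
      refine setIntegral_mono_on (h1i.const_mul _) (hint0' x hx) hK₀meas fun y hy => ?_
      exact mul_le_mul_of_nonneg_right (hmp y hy x hx) (h10 y)
    rw [integral_const_mul] at h1
    exact lt_of_lt_of_le (mul_pos hm hJ0') h1
  -- the fixed point associated with the given solution
  set v : C(↥S.K₀, ℝ) := ⟨fun y => Real.log (c' ↑y), log_restrict_cont hc'cont hc'pos⟩
    with hvdef
  have hr : ∀ᵐ y ∂(volume.restrict K₀), S.r0 v y = ρ₀' y := by
    filter_upwards [he1, self_mem_ae_restrict hK₀meas] with y h1 h2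
    have hcy := hc'pos y h2
    show S.f₀ y * Real.exp (-(S.ext v y)) = ρ₀' y
    rw [S.ext_apply v h2]
    show f₀ y * Real.exp (-(Real.log (c' y))) = ρ₀' y
    rw [Real.exp_neg, Real.exp_log hcy, h1]
    exact mul_inv_cancel_right₀ hcy.ne' _
  have hAveq : ∀ x, S.A v x = cT' x := by
    intro x
    have hr' := (ae_restrict_iff' hK₀meas).1 hr
    exact setIntegral_congr_ae hK₀meas (hr'.mono fun y hy hmem => by rw [hy hmem])
  have hBv : ∀ᵐ x ∂(volume.restrict KT), S.B v x = ρT' x := by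
    filter_upwards [he2, self_mem_ae_restrict hKTmeas] with x h2 hx
    have hcT := hcT'pos x hx
    show (S.fT x / S.A v x) ^ S.t = ρT' x
    rw [hAveq x]
    have hdiv : fT x / cT' x = ρT' x ^ ((1 + β) / β) := by
      rw [h2]; exact mul_div_cancel_right₀ _ hcT.ne'
    show (fT x / cT' x) ^ S.t = ρT' x
    rw [hdiv, ← Real.rpow_mul (h20 x)]
    have hexp : (1 + β) / β * S.t = 1 := by rw [mul_comm]; exact htval
    rw [hexp, Real.rpow_one]
  have hcv : ∀ y ∈ K₀, S.c v y = c' y := by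
    intro y hy
    have hBv' := (ae_restrict_iff' hKTmeas).1 hBv
    exact setIntegral_congr_ae hKTmeas (hBv'.mono fun x hx hmem => by rw [hx hmem])
  have hvfix : Function.IsFixedPt S.F v := by
    apply ContinuousMap.ext
    intro y
    show Real.log (S.c v ↑y) = Real.log (c' ↑y)
    rw [hcv _ y.2]
  have hveq : v = ustar := by
    rw [hustar]
    exact hC.fixedPoint_unique hvfix
  constructor
  · filter_upwards [hr, self_mem_ae_restrict hK₀meas] with y hy hmem
    rw [← hy, hveq, hρ₀def, Set.indicator_of_mem hmem]
  · filter_upwards [hBv, self_mem_ae_restrict hKTmeas] with x hx hmem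
    rw [← hx, hveq, hρTdef]
    simp only [dif_pos hmem]
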